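/- Let (𝒜_i)_{i∈I} be subalgebras of a non-commutative probability space (𝒜, φ) that are BMT independent with respect to a digraph G = (I, E). Let a_1 a_2 ⋯ a_m be a (not necessarily alternating) product with a_k ∈ 𝒜_{i_k} and i = (i_1, …, i_m). If there exist 1 ≤ ℓ < ℓ' ≤ m such that, with S = {ℓ, ℓ+1, …, ℓ'−1}, both ker_G[i|_S] and ker_G[i|_{S^c}] are contained (as sets of blocks) in ker_G[i], then φ(a_1 ⋯ a_m) = φ(a_ℓ ⋯ a_{ℓ'−1}) · φ(a_1 ⋯ a_{ℓ−1} a_{ℓ'} ⋯ a_m). -/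

import Mathlib

open scoped Classical
open Filter

noncomputable section

/-- The relation defining the kernel of `f` restricted to the index set `S`,
subordinated to the digraph with edge relation `E`: `k ∼ k'` iff `f k = f k'` and
every `l ∈ S` strictly between `k` and `k'` with `f l ≠ f k` satisfies `(f l, f k) ∈ E`. -/
def kerGRelOn {m : ℕ} {V : Type*} (E : V → V → Prop) (f : Fin m → V)
    (S : Finset (Fin m)) (k k' : Fin m) : Prop :=
  f k = f k' ∧ ∀ l ∈ S, min k k' < l → l < max k k' → f l ≠ f k → E (f l) (f k)

/-- The blocks of the kernel of `f|_S` subordinated to the digraph `E`. -/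
def kerGBlocks {m : ℕ} {V : Type*} (E : V → V → Prop) (f : Fin m → V)
    (S : Finset (Fin m)) : Finset (Finset (Fin m)) :=
  S.image fun k => S.filter fun k' => kerGRelOn E f S k k'

/-- The blocks of the plain kernel `ker[f]` of `f : [m] → V`. -/
def kerBlocks {m : ℕ} {V : Type*} (f : Fin m → V) : Finset (Finset (Fin m)) :=
  Finset.univ.image fun k => Finset.univ.filter fun k' => f k = f k'

/-- The product of `a k` for `k ∈ B`, taken in increasing order of `k`. -/
def blockProd {A : Type*} [Monoid A] {m : ℕ} (a : Fin m → A) (B : Finset (Fin m)) : A :=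
  ((B.sort (· ≤ ·)).map a).prod

/-- The edge set of the nesting-crossing graph of the partition `π`, relabeled along `f`:
the pair `(f-label of B, f-label of C)` is an edge whenever `B ≠ C` are blocks of `π` and
some `l ∈ B` lies strictly between two elements (equivalently, between min and max) of `C`. -/
def nestCrossEdges {m : ℕ} {V : Type*} (π : Finset (Finset (Fin m))) (f : Fin m → V) :
    Set (V × V) :=
  { p | ∃ B ∈ π, ∃ C ∈ π, B ≠ C ∧
      (∃ l ∈ B, ∃ c₁ ∈ C, ∃ c₂ ∈ C, c₁ < l ∧ l < c₂) ∧
      (∃ k ∈ B, f k = p.1) ∧ (∃ k' ∈ C, f k' = p.2) }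

/-- A family of (non-unital) subalgebras of a non-commutative probability space `(𝒜, φ)`
is BMT independent with respect to the digraph `E` on the index set `I`. -/
def BMTIndep {𝒜 : Type*} [Ring 𝒜] [Algebra ℂ 𝒜] (φ : 𝒜 →ₗ[ℂ] ℂ)
    {I : Type*} (E : I → I → Prop) (A : I → NonUnitalSubalgebra ℂ 𝒜) : Prop :=
  ∀ (m : ℕ), 1 ≤ m → ∀ (idx : Fin m → I) (a : Fin m → 𝒜),
    (∀ k, a k ∈ A (idx k)) →
    φ (List.ofFn a).prod = ∏ B ∈ kerGBlocks E idx Finset.univ, φ (blockProd a B)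

/-- Random variables `a 0, …, a (N-1)` are BMT independent with respect to the digraph `E`. -/
def BMTIndepVars {𝒜 : Type*} [Ring 𝒜] [Algebra ℂ 𝒜] (φ : 𝒜 →ₗ[ℂ] ℂ)
    {N : ℕ} (E : Fin N → Fin N → Prop) (a : Fin N → 𝒜) : Prop :=
  ∀ (m : ℕ) (idx : Fin m → Fin N),
    φ (List.ofFn fun k => a (idx k)).prod
      = ∏ B ∈ kerGBlocks E idx Finset.univ, φ (blockProd (fun k => a (idx k)) B)




section Aux

variable {m : ℕ} {V : Type*} {E : V → V → Prop} {f : Fin m → V}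

lemma kerGRelOn_refl (T : Finset (Fin m)) (k : Fin m) : kerGRelOn E f T k k :=
  ⟨rfl, fun l _ h1 h2 _ => absurd (h1.trans h2) (by simp)⟩

lemma kerGRelOn_symm {T : Finset (Fin m)} {k k' : Fin m} (h : kerGRelOn E f T k k') :
    kerGRelOn E f T k' k := by
  obtain ⟨h1, h2⟩ := h
  refine ⟨h1.symm, fun l hl ha hb hne => ?_⟩
  rw [min_comm] at ha; rw [max_comm] at hb
  rw [← h1] at hne ⊢
  exact h2 l hl ha hb hne

lemma kerGRelOn_trans {T : Finset (Fin m)} {k j x : Fin m}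
    (h1 : kerGRelOn E f T k j) (h2 : kerGRelOn E f T j x) : kerGRelOn E f T k x := by
  refine ⟨h1.1.trans h2.1, fun l hl hlo hhi hne => ?_⟩
  rw [min_lt_iff] at hlo; rw [lt_max_iff] at hhi
  rcases eq_or_ne l j with rfl | hlj
  · exact absurd h1.1.symm hne
  · have key : (min k j < l ∧ l < max k j) ∨ (min j x < l ∧ l < max j x) := by
      rw [min_lt_iff, lt_max_iff, min_lt_iff, lt_max_iff]
      rcases lt_or_gt_of_ne hlj with h | h
      · rcases hlo with h' | h'
        · exact Or.inl ⟨Or.inl h', Or.inr h⟩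
        · exact Or.inr ⟨Or.inr h', Or.inl h⟩
      · rcases hhi with h' | h'
        · exact Or.inl ⟨Or.inr h, Or.inl h'⟩
        · exact Or.inr ⟨Or.inl h, Or.inr h'⟩
    rcases key with ⟨ha, hb⟩ | ⟨ha, hb⟩
    · exact h1.2 l hl ha hb hne
    · have := h2.2 l hl ha hb (by rw [← h1.1]; exact hne)
      rwa [← h1.1] at this

lemma blk_eq_of_rel {T : Finset (Fin m)} {k j : Fin m} (h : kerGRelOn E f T k j) :
    (T.filter fun k' => kerGRelOn E f T k k') = T.filter fun k' => kerGRelOn E f T j k' := by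
  ext x
  simp only [Finset.mem_filter, and_congr_right_iff]
  exact fun _ => ⟨fun hx => kerGRelOn_trans (kerGRelOn_symm h) hx, fun hx => kerGRelOn_trans h hx⟩

lemma block_eq_blk {T : Finset (Fin m)} {B : Finset (Fin m)} {k : Fin m}
    (hB : B ∈ kerGBlocks E f T) (hk : k ∈ B) :
    B = T.filter fun k' => kerGRelOn E f T k k' := by
  obtain ⟨j, _, rfl⟩ := Finset.mem_image.1 hB
  exact blk_eq_of_rel (Finset.mem_filter.1 hk).2

lemma mem_blk_self {T : Finset (Fin m)} {k : Fin m} (hk : k ∈ T) :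
    k ∈ T.filter fun k' => kerGRelOn E f T k k' :=
  Finset.mem_filter.2 ⟨hk, kerGRelOn_refl T k⟩

lemma blk_mem_kerGBlocks {T : Finset (Fin m)} {k : Fin m} (hk : k ∈ T) :
    (T.filter fun k' => kerGRelOn E f T k k') ∈ kerGBlocks E f T :=
  Finset.mem_image.2 ⟨k, hk, rfl⟩

end Aux

section Restrict

variable {𝒜 : Type*} [Ring 𝒜] [Algebra ℂ 𝒜] {I : Type*}

lemma restrict_formula (φ : 𝒜 →ₗ[ℂ] ℂ) (E : I → I → Prop) (A : I → NonUnitalSubalgebra ℂ 𝒜)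
    (hindep : BMTIndep φ E A) {m : ℕ} (idx : Fin m → I) (a : Fin m → 𝒜)
    (ha : ∀ k, a k ∈ A (idx k)) (T : Finset (Fin m)) (hT : T.Nonempty) :
    φ (blockProd a T) = ∏ B ∈ kerGBlocks E idx T, φ (blockProd a B) := by
  obtain ⟨n, hn⟩ : ∃ n, T.card = n := ⟨T.card, rfl⟩
  have hn1 : 1 ≤ n := hn ▸ Finset.card_pos.mpr hT
  set g := T.orderEmbOfFin hn with hgdef
  have hgmem : ∀ j, g j ∈ T := fun j => T.orderEmbOfFin_mem hn j
  have hgsurj : ∀ y ∈ T, ∃ j, g j = y := by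
    intro y hy
    have : y ∈ Set.range g := by rw [hgdef, Finset.range_orderEmbOfFin]; exact hy
    exact this
  have himg : Finset.univ.image (⇑g) = T := by
    apply Finset.eq_of_subset_of_card_le
    · intro x hx; obtain ⟨j, _, rfl⟩ := Finset.mem_image.1 hx; exact hgmem j
    · rw [Finset.card_image_of_injective _ g.injective, Finset.card_univ, Fintype.card_fin, hn]
  have hrel : ∀ (j j' : Fin n),
      kerGRelOn E (idx ∘ ⇑g) Finset.univ j j' ↔ kerGRelOn E idx T (g j) (g j') := by
    intro j j'
    constructor
    · rintro ⟨h1, h2⟩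
      refine ⟨h1, fun l hl hlo hhi hne => ?_⟩
      obtain ⟨l₀, rfl⟩ := hgsurj l hl
      rw [← g.monotone.map_min] at hlo
      rw [← g.monotone.map_max] at hhi
      exact h2 l₀ (Finset.mem_univ _) (g.strictMono.lt_iff_lt.1 hlo)
        (g.strictMono.lt_iff_lt.1 hhi) hne
    · rintro ⟨h1, h2⟩
      refine ⟨h1, fun l₀ _ hlo hhi hne => ?_⟩
      exact h2 (g l₀) (hgmem l₀) (by rw [← g.monotone.map_min]; exact g.strictMono hlo)
        (by rw [← g.monotone.map_max]; exact g.strictMono hhi) hne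
  have hblk : ∀ j : Fin n,
      (Finset.univ.filter fun j' => kerGRelOn E (idx ∘ ⇑g) Finset.univ j j').image (⇑g)
        = T.filter fun k' => kerGRelOn E idx T (g j) k' := by
    intro j
    ext x
    simp only [Finset.mem_image, Finset.mem_filter, Finset.mem_univ, true_and]
    constructor
    · rintro ⟨j', hj', rfl⟩; exact ⟨hgmem j', (hrel j j').1 hj'⟩
    · rintro ⟨hx, hk⟩
      obtain ⟨j', rfl⟩ := hgsurj x hx
      exact ⟨j', (hrel j j').2 hk, rfl⟩
  have hblocks : kerGBlocks E idx T
      = (kerGBlocks E (idx ∘ ⇑g) Finset.univ).image (fun B => B.image (⇑g)) := by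
    unfold kerGBlocks
    rw [Finset.image_image]
    have hc : ((fun B => B.image (⇑g)) ∘ fun k =>
          Finset.univ.filter fun j' => kerGRelOn E (idx ∘ ⇑g) Finset.univ k j')
        = (fun k => T.filter fun k' => kerGRelOn E idx T k k') ∘ ⇑g :=
      funext fun j => hblk j
    rw [hc, ← Finset.image_image, himg]
  have hsortmap : ∀ B : Finset (Fin n),
      (B.image (⇑g)).sort (· ≤ ·) = (B.sort (· ≤ ·)).map (⇑g) := by
    intro B
    refine ((fun hp hs => List.Perm.eq_of_pairwise' hs (Finset.pairwise_sort _ _) hp) ?_ ?_).symm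
    · rw [← Multiset.coe_eq_coe, Finset.sort_eq]
      rw [Finset.image_val_of_injOn g.injective.injOn, ← Finset.sort_eq B (· ≤ ·),
        Multiset.map_coe]
    · exact List.Pairwise.map _ (fun a b hab => g.monotone hab) (Finset.pairwise_sort _ _)
  have hprod : ∀ B : Finset (Fin n), blockProd (a ∘ ⇑g) B = blockProd a (B.image (⇑g)) := by
    intro B
    unfold blockProd
    rw [hsortmap, List.map_map]
  have hofn : List.ofFn (a ∘ ⇑g) = (T.sort (· ≤ ·)).map a := by
    apply List.ext_getElem
    · rw [List.length_ofFn, List.length_map, Finset.length_sort, hn]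
    · intro i hi1 hi2
      rw [List.getElem_ofFn, List.getElem_map]
      show a (g _) = _
      rw [T.orderEmbOfFin_apply hn]
      simp [Fin.getElem_fin]
  have key := hindep n hn1 (idx ∘ ⇑g) (a ∘ ⇑g) (fun k => ha (g k))
  rw [hofn] at key
  have hLHS : blockProd a T = ((T.sort (· ≤ ·)).map a).prod := rfl
  rw [hLHS, key, hblocks, Finset.prod_image]
  · exact Finset.prod_congr rfl fun B _ => by rw [← hprod B]
  · intro B₁ _ B₂ _ hBB
    exact Finset.image_injective g.injective hBB

end Restrict

/-- if both `ker_G[i|_S]` and `ker_G[i|_{S^c}]` are contained in `ker_G[i]`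
for a window `S` of consecutive indices, then `φ` factorizes over the window. -/
theorem stmt6 {𝒜 : Type*} [Ring 𝒜] [Algebra ℂ 𝒜] (φ : 𝒜 →ₗ[ℂ] ℂ) (hφ : φ 1 = 1)
    {I : Type*} (E : I → I → Prop) (hE : ∀ v, ¬ E v v)
    (A : I → NonUnitalSubalgebra ℂ 𝒜) (hindep : BMTIndep φ E A)
    (m : ℕ) (idx : Fin m → I) (a : Fin m → 𝒜) (ha : ∀ k, a k ∈ A (idx k))
    (l l' : ℕ) (h1 : l < l') (h2 : l' < m)
    (S : Finset (Fin m)) (hS : S = Finset.univ.filter fun k => l ≤ k.val ∧ k.val < l')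
    (hsub1 : kerGBlocks E idx S ⊆ kerGBlocks E idx Finset.univ)
    (hsub2 : kerGBlocks E idx Sᶜ ⊆ kerGBlocks E idx Finset.univ) :
    φ (List.ofFn a).prod = φ (blockProd a S) * φ (blockProd a Sᶜ) := by
  have hm : 1 ≤ m := by omega
  have hSne : S.Nonempty := ⟨⟨l, by omega⟩, by rw [hS]; simp; omega⟩
  have hScne : Sᶜ.Nonempty := ⟨⟨l', h2⟩, by rw [hS]; simp⟩
  -- blocks on S agree with blocks on univ for members of S
  have keyS : ∀ k ∈ S, (S.filter fun k' => kerGRelOn E idx S k k')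
      = Finset.univ.filter fun k' => kerGRelOn E idx Finset.univ k k' := by
    intro k hk
    exact block_eq_blk (hsub1 (blk_mem_kerGBlocks hk)) (mem_blk_self hk)
  have keyC : ∀ k ∈ Sᶜ, (Sᶜ.filter fun k' => kerGRelOn E idx Sᶜ k k')
      = Finset.univ.filter fun k' => kerGRelOn E idx Finset.univ k k' := by
    intro k hk
    exact block_eq_blk (hsub2 (blk_mem_kerGBlocks hk)) (mem_blk_self hk)
  have hunion : kerGBlocks E idx (Finset.univ : Finset (Fin m))
      = kerGBlocks E idx S ∪ kerGBlocks E idx Sᶜ := by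
    ext B
    constructor
    · intro hB
      obtain ⟨j, _, rfl⟩ := Finset.mem_image.1 hB
      by_cases hj : j ∈ S
      · exact Finset.mem_union_left _ (by rw [← keyS j hj]; exact blk_mem_kerGBlocks hj)
      · have hj' : j ∈ Sᶜ := Finset.mem_compl.2 hj
        exact Finset.mem_union_right _ (by rw [← keyC j hj']; exact blk_mem_kerGBlocks hj')
    · intro hB
      rcases Finset.mem_union.1 hB with h | h
      · exact hsub1 h
      · exact hsub2 h
  have hdisj : Disjoint (kerGBlocks E idx S) (kerGBlocks E idx Sᶜ) := by
    rw [Finset.disjoint_left]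
    intro B hB1 hB2
    obtain ⟨j, hj, rfl⟩ := Finset.mem_image.1 hB1
    obtain ⟨j', hj', heq⟩ := Finset.mem_image.1 hB2
    have hjc : j ∈ Sᶜ := by
      have hjB : j ∈ S.filter fun k' => kerGRelOn E idx S j k' := mem_blk_self hj
      rw [← heq] at hjB
      exact (Finset.mem_filter.1 hjB).1
    exact (Finset.mem_compl.1 hjc) hj
  rw [hindep m hm idx a ha, hunion, Finset.prod_union hdisj,
    ← restrict_formula φ E A hindep idx a ha S hSne,
    ← restrict_formula φ E A hindep idx a ha Sᶜ hScne]

end
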